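/- A projective 2-divisible binary linear [n,k] code exists if and only if k+1 ≤ n ≤ 2^k − 1 and n ∉ {2^k − 3, 2^k − 2}. -/

import Mathlib

open Finset

lemma zmod2_cases (a : ZMod 2) : a = 0 ∨ a = 1 := by revert a; decide

lemma zmod2_add_self (a : ZMod 2) : a + a = 0 := by revert a; decide

lemma even_iff_cast_zmod2 (m : ℕ) : Even m ↔ (m : ZMod 2) = 0 := by
  rw [ZMod.natCast_eq_zero_iff]
  constructor
  · rintro ⟨r, hr⟩; exact ⟨r, by omega⟩
  · rintro ⟨r, hr⟩; exact ⟨r, by omega⟩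

-- parity of hamming norm as a sum
lemma hammingNorm_cast_eq_sum {n : ℕ} (c : Fin n → ZMod 2) :
    ((hammingNorm c : ZMod 2)) = ∑ i, c i := by
  rw [hammingNorm]
  rw [← Finset.sum_filter_ne_zero (s := univ) (f := fun i => c i)]
  rw [Finset.card_eq_sum_ones, Nat.cast_sum]
  apply Finset.sum_congr rfl
  intro i hi
  simp only [Finset.mem_filter] at hi
  rcases zmod2_cases (c i) with h | h
  · exact absurd h hi.2
  · simp [h]

lemma sum_univ_zmod2_pi {k : ℕ} (hk : 2 ≤ k) : ∑ x : Fin k → ZMod 2, x = 0 := by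
  funext i
  rw [Finset.sum_apply]
  obtain ⟨j, hj⟩ : ∃ j : Fin k, j ≠ i := by
    have h1 : 1 < Fintype.card (Fin k) := by simp only [Fintype.card_fin]; omega
    exact Fintype.exists_ne_of_one_lt_card h1 i
  have hsingle : ∀ x : Fin k → ZMod 2, (x + (Pi.single j 1 : Fin k → ZMod 2)) i = x i := by
    intro x
    simp [Pi.single_apply, Ne.symm hj]
  refine Finset.sum_ninvolution (fun x => x + (Pi.single j 1 : Fin k → ZMod 2)) ?_ ?_ ?_ ?_
  · intro x
    rw [hsingle]
    exact zmod2_add_self _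
  · intro x h
    intro hc
    have := congrFun hc j
    simp at this
  · intro x; exact Finset.mem_univ _
  · intro x
    funext l
    simp [add_assoc, zmod2_add_self]

lemma pi_add_self {k : ℕ} (x : Fin k → ZMod 2) : x + x = 0 :=
  funext fun i => zmod2_add_self (x i)

lemma step_lemma {k : ℕ} (S : Finset (Fin k → ZMod 2)) (h0 : (0 : Fin k → ZMod 2) ∉ S)
    (hsum : ∑ x ∈ S, x = 0) (hne : S.Nonempty) (hcard : 2 * S.card + 1 < 2 ^ k) :
    ∃ S' : Finset (Fin k → ZMod 2), S'.card = S.card + 1 ∧ (0 : Fin k → ZMod 2) ∉ S' ∧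
      ∑ x ∈ S', x = 0 ∧
      Submodule.span (ZMod 2) (S : Set (Fin k → ZMod 2)) ≤
        Submodule.span (ZMod 2) (S' : Set (Fin k → ZMod 2)) := by
  classical
  obtain ⟨v, hv⟩ := hne
  set B : Finset (Fin k → ZMod 2) := insert 0 (S ∪ S.image (· + v)) with hB
  have hBcard : B.card ≤ 2 * S.card + 1 := by
    calc B.card ≤ (S ∪ S.image (· + v)).card + 1 := Finset.card_insert_le _ _
    _ ≤ (S.card + (S.image (· + v)).card) + 1 := by
        exact add_le_add_left (Finset.card_union_le _ _) 1
    _ ≤ (S.card + S.card) + 1 := by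
        exact add_le_add_left (add_le_add_right (Finset.card_image_le) _) 1
    _ = 2 * S.card + 1 := by ring
  obtain ⟨a, ha⟩ : ∃ a : Fin k → ZMod 2, a ∉ B := by
    by_contra h
    push_neg at h
    have : B = univ := Finset.eq_univ_iff_forall.mpr h
    have hcardB : B.card = 2 ^ k := by
      rw [this, Finset.card_univ]
      simp [Fintype.card_fun]
    omega
  have ha0 : a ≠ 0 := by
    intro h; exact ha (by rw [hB, h]; exact Finset.mem_insert_self _ _)
  have haS : a ∉ S := fun h => ha (by
    rw [hB]; exact Finset.mem_insert_of_mem (Finset.mem_union_left _ h))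
  have havS : a + v ∉ S := by
    intro h
    apply ha
    rw [hB]
    refine Finset.mem_insert_of_mem (Finset.mem_union_right _ ?_)
    refine Finset.mem_image.mpr ⟨a + v, h, ?_⟩
    show a + v + v = a
    rw [add_assoc, pi_add_self, add_zero]
  have hv0 : v ≠ 0 := fun h => h0 (h ▸ hv)
  have hav0 : a + v ≠ 0 := by
    intro h
    have : a = v := by
      have := congrArg (· + v) h
      simpa [add_assoc, pi_add_self] using this
    exact haS (this ▸ hv)
  have hava : a ≠ a + v := by
    intro h
    apply hv0
    have h' : a + v = a + 0 := by rw [add_zero]; exact h.symm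
    exact add_left_cancel h'
  refine ⟨insert a (insert (a + v) (S.erase v)), ?_, ?_, ?_, ?_⟩
  · have h1 : a + v ∉ S.erase v := fun h => havS (Finset.mem_of_mem_erase h)
    have h2 : a ∉ insert (a + v) (S.erase v) := by
      intro h
      rcases Finset.mem_insert.mp h with h | h
      · exact hava h
      · exact haS (Finset.mem_of_mem_erase h)
    rw [Finset.card_insert_of_notMem h2, Finset.card_insert_of_notMem h1,
      Finset.card_erase_of_mem hv]
    have : 1 ≤ S.card := Finset.card_pos.mpr ⟨v, hv⟩
    omega
  · intro h
    rcases Finset.mem_insert.mp h with h | h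
    · exact ha0 h.symm
    rcases Finset.mem_insert.mp h with h | h
    · exact hav0 h.symm
    · exact h0 (Finset.mem_of_mem_erase h)
  · have h1 : a + v ∉ S.erase v := fun h => havS (Finset.mem_of_mem_erase h)
    have h2 : a ∉ insert (a + v) (S.erase v) := by
      intro h
      rcases Finset.mem_insert.mp h with h | h
      · exact hava h
      · exact haS (Finset.mem_of_mem_erase h)
    rw [Finset.sum_insert h2, Finset.sum_insert h1]
    have he : v + ∑ x ∈ S.erase v, x = 0 := by
      rw [← Finset.sum_insert (f := fun x => x) (Finset.notMem_erase v S), Finset.insert_erase hv]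
      exact hsum
    calc a + (a + v + ∑ x ∈ S.erase v, x) = (a + a) + (v + ∑ x ∈ S.erase v, x) := by ring
    _ = 0 := by rw [pi_add_self, he, add_zero]
  · rw [Submodule.span_le]
    intro x hx
    have hxS : x ∈ S := Finset.mem_coe.mp hx
    rcases eq_or_ne x v with h | h
    · have hmem1 : a ∈ (insert a (insert (a + v) (S.erase v)) : Finset _) :=
        Finset.mem_insert_self _ _
      have hmem2 : a + v ∈ (insert a (insert (a + v) (S.erase v)) : Finset _) :=
        Finset.mem_insert_of_mem (Finset.mem_insert_self _ _)
      have hxe : x = a + (a + v) := by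
        rw [← add_assoc, pi_add_self, zero_add, h]
      rw [hxe]
      exact Submodule.add_mem _ (Submodule.subset_span (Finset.mem_coe.mpr hmem1))
        (Submodule.subset_span (Finset.mem_coe.mpr hmem2))
    · have hmem : x ∈ (insert a (insert (a + v) (S.erase v)) : Finset _) :=
        Finset.mem_insert_of_mem (Finset.mem_insert_of_mem (Finset.mem_erase.mpr ⟨h, hxS⟩))
      exact Submodule.subset_span (Finset.mem_coe.mpr hmem)

lemma reach_lemma {k : ℕ} (hk : 1 ≤ k) (S0 : Finset (Fin k → ZMod 2))
    (h0 : (0 : Fin k → ZMod 2) ∉ S0) (hsum : ∑ x ∈ S0, x = 0) (hne : S0.Nonempty) :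
    ∀ n, S0.card ≤ n → n ≤ 2 ^ (k - 1) →
    ∃ S : Finset (Fin k → ZMod 2), S.card = n ∧ (0 : Fin k → ZMod 2) ∉ S ∧
      ∑ x ∈ S, x = 0 ∧
      Submodule.span (ZMod 2) (S0 : Set (Fin k → ZMod 2)) ≤
        Submodule.span (ZMod 2) (S : Set (Fin k → ZMod 2)) := by
  have hpow : 2 ^ (k - 1) * 2 = 2 ^ k := by
    rw [← pow_succ]
    congr 1
    omega
  intro n hn
  induction n, hn using Nat.le_induction with
  | base => intro _; exact ⟨S0, rfl, h0, hsum, le_refl _⟩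
  | succ m hm ih =>
    intro hm2
    obtain ⟨S, hcard, hS0, hSsum, hspan⟩ := ih (by omega)
    have hSne : S.Nonempty := by
      rw [← Finset.card_pos, hcard]
      have := Finset.card_pos.mpr hne
      omega
    obtain ⟨S', h1, h2, h3, h4⟩ := step_lemma S hS0 hSsum hSne (by omega)
    exact ⟨S', by omega, h2, h3, le_trans hspan h4⟩

lemma span_of_card_large {k : ℕ} (S : Finset (Fin k → ZMod 2))
    (h0 : (0 : Fin k → ZMod 2) ∉ S) (hcard : 2 ^ (k - 1) ≤ S.card) (hk : 1 ≤ k) :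
    Submodule.span (ZMod 2) (S : Set (Fin k → ZMod 2)) = ⊤ := by
  classical
  by_contra hne
  set W := Submodule.span (ZMod 2) (S : Set (Fin k → ZMod 2)) with hW
  have hlt : W < ⊤ := lt_top_iff_ne_top.mpr hne
  have hfr : Module.finrank (ZMod 2) W < k := by
    have h := Submodule.finrank_lt (K := ZMod 2) (V := Fin k → ZMod 2) hlt.ne
    rwa [Module.finrank_fin_fun] at h
  have hcardW : Fintype.card W = 2 ^ Module.finrank (ZMod 2) W := by
    have := Module.card_eq_pow_finrank (K := ZMod 2) (V := W)
    rwa [ZMod.card 2] at this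
  have hsub : insert 0 S ⊆ (W : Set (Fin k → ZMod 2)).toFinset := by
    intro x hx
    rw [Set.mem_toFinset]
    rcases Finset.mem_insert.mp hx with h | h
    · rw [h]; exact W.zero_mem
    · exact Submodule.subset_span h
  have hle : (insert 0 S).card ≤ Fintype.card W := by
    calc (insert 0 S).card ≤ (W : Set (Fin k → ZMod 2)).toFinset.card := Finset.card_le_card hsub
    _ = Fintype.card W := Set.toFinset_card _
  rw [Finset.card_insert_of_notMem h0, hcardW] at hle
  have hpowle : 2 ^ Module.finrank (ZMod 2) W ≤ 2 ^ (k - 1) :=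
    Nat.pow_le_pow_right (by norm_num) (by omega)
  omega

lemma base_set_one {k : ℕ} (hk : 2 ≤ k) :
    ∃ S0 : Finset (Fin k → ZMod 2), S0.card = k + 1 ∧ (0 : Fin k → ZMod 2) ∉ S0 ∧
      ∑ x ∈ S0, x = 0 ∧ Submodule.span (ZMod 2) (S0 : Set (Fin k → ZMod 2)) = ⊤ := by
  classical
  have hinj : Function.Injective (fun j : Fin k => (Pi.single j 1 : Fin k → ZMod 2)) := by
    intro j j' h
    by_contra hne
    have h1 := congrFun h j
    simp [Pi.single_apply, hne] at h1
  set u : Fin k → ZMod 2 := fun _ => 1 with hu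
  set T : Finset (Fin k → ZMod 2) := univ.image (fun j : Fin k => (Pi.single j 1 : Fin k → ZMod 2))
    with hT
  have huT : u ∉ T := by
    rw [hT]
    intro h
    obtain ⟨j, _, hj⟩ := Finset.mem_image.mp h
    obtain ⟨j', hj'⟩ : ∃ j' : Fin k, j' ≠ j := by
      have h1 : 1 < Fintype.card (Fin k) := by simp only [Fintype.card_fin]; omega
      exact Fintype.exists_ne_of_one_lt_card h1 j
    have := congrFun hj j'
    simp [Pi.single_apply, hj', hu] at this
  refine ⟨insert u T, ?_, ?_, ?_, ?_⟩
  · rw [Finset.card_insert_of_notMem huT, hT, Finset.card_image_of_injective _ hinj]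
    simp
  · intro h
    rcases Finset.mem_insert.mp h with h | h
    · have := congrFun h ⟨0, by omega⟩
      simp [hu] at this
    · obtain ⟨j, _, hj⟩ := Finset.mem_image.mp (hT ▸ h)
      have := congrFun hj j
      simp at this
  · rw [Finset.sum_insert huT, hT, Finset.sum_image (fun x _ y _ h => hinj h)]
    have hsum : ∑ j : Fin k, (Pi.single j 1 : Fin k → ZMod 2) = u := by
      rw [hu]
      exact Finset.univ_sum_single (fun _ => (1 : ZMod 2))
    rw [hsum, pi_add_self]
  · rw [eq_top_iff, ← (Pi.basisFun (ZMod 2) (Fin k)).span_eq]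
    apply Submodule.span_mono
    rintro x ⟨j, rfl⟩
    rw [Pi.basisFun_apply]
    exact Finset.mem_coe.mpr (Finset.mem_insert_of_mem
      (Finset.mem_image.mpr ⟨j, Finset.mem_univ _, rfl⟩))

lemma base_set_two {k : ℕ} (hk : 2 ≤ k) :
    ∃ S0 : Finset (Fin k → ZMod 2), S0.card = 3 ∧ (0 : Fin k → ZMod 2) ∉ S0 ∧
      ∑ x ∈ S0, x = 0 := by
  classical
  set i0 : Fin k := ⟨0, by omega⟩ with hi0
  set i1 : Fin k := ⟨1, by omega⟩ with hi1
  have hne : i0 ≠ i1 := by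
    intro h
    have := congrArg Fin.val h
    simp [hi0, hi1] at this
  set x0 : Fin k → ZMod 2 := Pi.single i0 1 with hx0
  set x1 : Fin k → ZMod 2 := Pi.single i1 1 with hx1
  have e00 : x0 i0 = 1 := by simp [hx0]
  have e01 : x0 i1 = 0 := by simp [hx0, Pi.single_apply, Ne.symm hne]
  have e10 : x1 i0 = 0 := by simp [hx1, Pi.single_apply, hne]
  have e11 : x1 i1 = 1 := by simp [hx1]
  have h01 : x0 ≠ x1 := by
    intro h; have := congrFun h i0; rw [e00, e10] at this; exact one_ne_zero this
  have h0s : x0 ≠ x0 + x1 := by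
    intro h; have := congrFun h i1; rw [Pi.add_apply, e01, e11, zero_add] at this
    exact one_ne_zero this.symm
  have h1s : x1 ≠ x0 + x1 := by
    intro h; have := congrFun h i0; rw [Pi.add_apply, e00, e10, add_zero] at this
    exact one_ne_zero this.symm
  have hm1 : x0 ∉ ({x1, x0 + x1} : Finset (Fin k → ZMod 2)) := by
    simp only [Finset.mem_insert, Finset.mem_singleton]
    push_neg
    exact ⟨h01, h0s⟩
  have hm2 : x1 ∉ ({x0 + x1} : Finset (Fin k → ZMod 2)) := by
    simp only [Finset.mem_singleton]
    exact h1s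
  refine ⟨{x0, x1, x0 + x1}, ?_, ?_, ?_⟩
  · rw [Finset.card_insert_of_notMem hm1, Finset.card_insert_of_notMem hm2,
      Finset.card_singleton]
  · intro h
    rcases Finset.mem_insert.mp h with h | h
    · have := congrFun h i0; rw [Pi.zero_apply] at this; rw [e00] at this
      exact one_ne_zero this.symm
    rcases Finset.mem_insert.mp h with h | h
    · have := congrFun h i1; rw [Pi.zero_apply] at this; rw [e11] at this
      exact one_ne_zero this.symm
    · rw [Finset.mem_singleton] at h
      have := congrFun h i0; rw [Pi.zero_apply, Pi.add_apply, e00, e10, add_zero] at this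
      exact one_ne_zero this.symm
  · rw [Finset.sum_insert hm1, Finset.sum_insert hm2, Finset.sum_singleton]
    calc x0 + (x1 + (x0 + x1)) = (x0 + x0) + (x1 + x1) := by ring
    _ = 0 := by rw [pi_add_self, pi_add_self, add_zero]

lemma exists_good_set {n k : ℕ} (hk2 : 2 ≤ k) (h1 : k + 1 ≤ n) (h2 : n ≤ 2 ^ k - 1)
    (h3 : n ≠ 2 ^ k - 3) (h4 : n ≠ 2 ^ k - 2) :
    ∃ S : Finset (Fin k → ZMod 2), S.card = n ∧ (0 : Fin k → ZMod 2) ∉ S ∧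
      ∑ x ∈ S, x = 0 ∧ Submodule.span (ZMod 2) (S : Set (Fin k → ZMod 2)) = ⊤ := by
  classical
  have hpow : 2 ^ (k - 1) * 2 = 2 ^ k := by
    rw [← pow_succ]; congr 1; omega
  have hQ2 : 2 ≤ 2 ^ (k - 1) := by
    calc 2 = 2 ^ 1 := (pow_one 2).symm
    _ ≤ 2 ^ (k - 1) := Nat.pow_le_pow_right (by norm_num) (by omega)
  by_cases hsmall : n ≤ 2 ^ (k - 1)
  · obtain ⟨S0, hc0, h00, hs0, hsp0⟩ := base_set_one hk2
    have hne0 : S0.Nonempty := by rw [← Finset.card_pos, hc0]; omega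
    obtain ⟨S, hc, hS0, hSsum, hspan⟩ :=
      reach_lemma (by omega) S0 h00 hs0 hne0 n (by omega) hsmall
    refine ⟨S, hc, hS0, hSsum, ?_⟩
    rw [eq_top_iff, ← hsp0]
    exact hspan
  · push_neg at hsmall
    by_cases hm0 : n = 2 ^ k - 1
    · refine ⟨univ.erase 0, ?_, Finset.notMem_erase _ _, ?_, ?_⟩
      · rw [Finset.card_erase_of_mem (Finset.mem_univ _), Finset.card_univ]
        simp [Fintype.card_fun, hm0]
      · have h := sum_univ_zmod2_pi hk2
        have h2 : (0 : Fin k → ZMod 2) + ∑ x ∈ univ.erase (0 : Fin k → ZMod 2), x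
            = ∑ x : Fin k → ZMod 2, x := by
          rw [← Finset.sum_insert (f := fun x => x) (Finset.notMem_erase _ _),
            Finset.insert_erase (Finset.mem_univ _)]
        rw [zero_add] at h2
        rw [h2, h]
      · apply span_of_card_large _ (Finset.notMem_erase _ _) _ (by omega)
        rw [Finset.card_erase_of_mem (Finset.mem_univ _), Finset.card_univ]
        simp only [Fintype.card_fun, ZMod.card, Fintype.card_fin]
        omega
    · set m := 2 ^ k - 1 - n with hm
      have hm3 : 3 ≤ m := by
        have h4k : 4 ≤ 2 ^ k := by omega
        omega
      have hmle : m ≤ 2 ^ (k - 1) := by omega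
      obtain ⟨T0, hc0, h00, hs0⟩ := base_set_two hk2
      have hne0 : T0.Nonempty := by rw [← Finset.card_pos, hc0]; omega
      obtain ⟨T, hcT, hT0, hTsum, _⟩ :=
        reach_lemma (by omega) T0 h00 hs0 hne0 m (by omega) hmle
      have hsub : T ⊆ univ.erase 0 := by
        intro x hx
        exact Finset.mem_erase.mpr ⟨fun h => hT0 (h ▸ hx), Finset.mem_univ _⟩
      have hcE : (univ.erase (0 : Fin k → ZMod 2)).card = 2 ^ k - 1 := by
        rw [Finset.card_erase_of_mem (Finset.mem_univ _), Finset.card_univ]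
        simp [Fintype.card_fun]
      refine ⟨univ.erase 0 \ T, ?_, ?_, ?_, ?_⟩
      · rw [Finset.card_sdiff_of_subset hsub, hcE, hcT]
        omega
      · intro h
        exact Finset.notMem_erase _ _ (Finset.mem_sdiff.mp h).1
      · have hsd := Finset.sum_sdiff (f := fun x : Fin k → ZMod 2 => x) hsub
        rw [hTsum, add_zero] at hsd
        rw [hsd]
        have h := sum_univ_zmod2_pi hk2
        have h2 : (0 : Fin k → ZMod 2) + ∑ x ∈ univ.erase (0 : Fin k → ZMod 2), x
            = ∑ x : Fin k → ZMod 2, x := by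
          rw [← Finset.sum_insert (f := fun x => x) (Finset.notMem_erase _ _),
            Finset.insert_erase (Finset.mem_univ _)]
        rw [zero_add] at h2
        rw [h2, h]
      · apply span_of_card_large _ _ _ (by omega)
        · intro h
          exact Finset.notMem_erase _ _ (Finset.mem_sdiff.mp h).1
        · rw [Finset.card_sdiff_of_subset hsub, hcE, hcT]
          omega

lemma construct_code {n k : ℕ} (S : Finset (Fin k → ZMod 2))
    (hcard : S.card = n) (h0 : (0 : Fin k → ZMod 2) ∉ S) (hsum : ∑ x ∈ S, x = 0)
    (hspan : Submodule.span (ZMod 2) (S : Set (Fin k → ZMod 2)) = ⊤) :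
    ∃ C : Submodule (ZMod 2) (Fin n → ZMod 2),
      Module.finrank (ZMod 2) C = k ∧
      (∀ c ∈ C, Even (hammingNorm c)) ∧
      (∀ i : Fin n, ∃ c ∈ C, c i ≠ 0) ∧
      (∀ i j : Fin n, i ≠ j → ∃ c ∈ C, c i ≠ c j) := by
  classical
  have hcard' : Fintype.card S = n := by rw [Fintype.card_coe, hcard]
  set e : S ≃ Fin n := Fintype.equivFinOfCardEq hcard' with he
  set M : Fin n → (Fin k → ZMod 2) := fun i => ((e.symm i : S) : Fin k → ZMod 2) with hM
  have Mmem : ∀ i, M i ∈ S := fun i => (e.symm i).2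
  have Minj : Function.Injective M := by
    intro i j h
    have h1 : e.symm i = e.symm j := Subtype.coe_injective h
    exact e.symm.injective h1
  have Mrange : Set.range M = (S : Set (Fin k → ZMod 2)) := by
    ext x
    constructor
    · rintro ⟨i, rfl⟩; exact Mmem i
    · intro hx
      exact ⟨e ⟨x, hx⟩, by rw [hM]; simp⟩
  have Msum : ∑ i, M i = 0 := by
    have h1 : ∑ i, M i = ∑ s : S, (s : Fin k → ZMod 2) :=
      Equiv.sum_comp e.symm (fun s : S => (s : Fin k → ZMod 2))
    rw [h1, Finset.sum_coe_sort S (fun x => x), hsum]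
  set φ : (Fin k → ZMod 2) →ₗ[ZMod 2] (Fin n → ZMod 2) :=
    { toFun := fun x => fun i => ∑ j, x j * M i j
      map_add' := by
        intro x y
        funext i
        simp [add_mul, Finset.sum_add_distrib]
      map_smul' := by
        intro c x
        funext i
        simp [Finset.mul_sum, mul_assoc] } with hφ
  have φapply : ∀ x i, φ x i = ∑ j, x j * M i j := fun x i => rfl
  have hsingle_eval : ∀ (x : Fin k → ZMod 2) (j' : Fin k),
      ∑ j, (Pi.single j' 1 : Fin k → ZMod 2) j * x j = x j' := by
    intro x j'
    rw [Finset.sum_eq_single j']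
    · simp
    · intro b _ hb
      simp [Pi.single_apply, hb, Ne.symm hb]
    · intro h; exact absurd (Finset.mem_univ _) h
  have hinj : Function.Injective φ := by
    rw [← LinearMap.ker_eq_bot]
    rw [Submodule.eq_bot_iff]
    intro x hx
    rw [LinearMap.mem_ker] at hx
    set ψ : (Fin k → ZMod 2) →ₗ[ZMod 2] ZMod 2 :=
      { toFun := fun w => ∑ j, x j * w j
        map_add' := by intro a b; simp [mul_add, Finset.sum_add_distrib]
        map_smul' := by intro c a; simp [Finset.mul_sum]; apply Finset.sum_congr rfl; intros; ring }
      with hψ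
    have hψ0 : ∀ w ∈ (S : Set (Fin k → ZMod 2)), ψ w = (0 : (Fin k → ZMod 2) →ₗ[ZMod 2] ZMod 2) w := by
      intro w hw
      have : w ∈ Set.range M := by rw [Mrange]; exact hw
      obtain ⟨i, rfl⟩ := this
      have := congrFun hx i
      simpa [hψ, φapply] using this
    have hψeq : ψ = 0 := LinearMap.ext_on hspan hψ0
    funext j'
    have := congrArg (fun f : (Fin k → ZMod 2) →ₗ[ZMod 2] ZMod 2 => f (Pi.single j' 1)) hψeq
    simp only [hψ, LinearMap.coe_mk, AddHom.coe_mk, LinearMap.zero_apply] at this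
    rw [Finset.sum_eq_single j'] at this
    · simpa using this
    · intro b _ hb
      simp [Pi.single_apply, Ne.symm hb]
    · intro h; exact absurd (Finset.mem_univ _) h
  refine ⟨LinearMap.range φ, ?_, ?_, ?_, ?_⟩
  · rw [LinearMap.finrank_range_of_inj hinj, Module.finrank_fin_fun]
  · rintro c ⟨x, rfl⟩
    rw [even_iff_cast_zmod2, hammingNorm_cast_eq_sum]
    have : ∑ i, φ x i = ∑ j, x j * (∑ i, M i j) := by
      simp only [φapply]
      rw [Finset.sum_comm]
      apply Finset.sum_congr rfl
      intros j _
      rw [Finset.mul_sum]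
    rw [this]
    have hz : ∀ j, ∑ i, M i j = 0 := by
      intro j
      have := congrFun Msum j
      rwa [Finset.sum_apply] at this
    simp [hz]
  · intro i
    have hMne : M i ≠ 0 := fun h => h0 (h ▸ Mmem i)
    obtain ⟨j, hj⟩ : ∃ j, M i j ≠ 0 := by
      by_contra h
      push_neg at h
      exact hMne (funext h)
    refine ⟨φ (Pi.single j 1), ⟨Pi.single j 1, rfl⟩, ?_⟩
    rw [φapply]
    rw [show ∑ j', (Pi.single j 1 : Fin k → ZMod 2) j' * M i j' = M i j from by
      rw [Finset.sum_eq_single j]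
      · simp
      · intro b _ hb; simp [Pi.single_apply, hb]
      · intro h; exact absurd (Finset.mem_univ _) h]
    exact hj
  · intro i j hij
    have hMne : M i ≠ M j := fun h => hij (Minj h)
    obtain ⟨l, hl⟩ : ∃ l, M i l ≠ M j l := by
      by_contra h
      push_neg at h
      exact hMne (funext h)
    refine ⟨φ (Pi.single l 1), ⟨Pi.single l 1, rfl⟩, ?_⟩
    rw [φapply, φapply]
    rw [show ∑ j', (Pi.single l 1 : Fin k → ZMod 2) j' * M i j' = M i l from by
      rw [Finset.sum_eq_single l]
      · simp
      · intro b _ hb; simp [Pi.single_apply, hb]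
      · intro h; exact absurd (Finset.mem_univ _) h]
    rw [show ∑ j', (Pi.single l 1 : Fin k → ZMod 2) j' * M j j' = M j l from by
      rw [Finset.sum_eq_single l]
      · simp
      · intro b _ hb; simp [Pi.single_apply, hb]
      · intro h; exact absurd (Finset.mem_univ _) h]
    exact hl

lemma forward_dir {n k : ℕ} (hn : 0 < n) (hk : 0 < k)
    (C : Submodule (ZMod 2) (Fin n → ZMod 2))
    (hrank : Module.finrank (ZMod 2) C = k)
    (heven : ∀ c ∈ C, Even (hammingNorm c))
    (hnz : ∀ i : Fin n, ∃ c ∈ C, c i ≠ 0)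
    (hdist : ∀ i j : Fin n, i ≠ j → ∃ c ∈ C, c i ≠ c j) :
    k + 1 ≤ n ∧ n ≤ 2 ^ k - 1 ∧ n ≠ 2 ^ k - 3 ∧ n ≠ 2 ^ k - 2 := by
  classical
  have hsumzero : ∀ c ∈ C, ∑ i, c i = 0 := by
    intro c hc
    rw [← hammingNorm_cast_eq_sum, ← even_iff_cast_zmod2]
    exact heven c hc
  -- part (a) : k + 1 ≤ n
  have ha : k + 1 ≤ n := by
    set sumL : (Fin n → ZMod 2) →ₗ[ZMod 2] ZMod 2 :=
      { toFun := fun c => ∑ i, c i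
        map_add' := by intro a b; simp [Finset.sum_add_distrib]
        map_smul' := by intro c a; simp [Finset.mul_sum] } with hsumL
    have hCle : C ≤ LinearMap.ker sumL := by
      intro c hc
      rw [LinearMap.mem_ker]
      exact hsumzero c hc
    have hsurj : Function.Surjective sumL := by
      intro y
      refine ⟨Pi.single ⟨0, hn⟩ y, ?_⟩
      show ∑ i, Pi.single (⟨0, hn⟩ : Fin n) y i = y
      rw [Finset.sum_eq_single (⟨0, hn⟩ : Fin n)]
      · simp
      · intro b _ hb; simp [Pi.single_apply, hb]
      · intro h; exact absurd (Finset.mem_univ _) h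
    have hrk := LinearMap.finrank_range_add_finrank_ker sumL
    rw [LinearMap.range_eq_top.mpr hsurj] at hrk
    rw [finrank_top, Module.finrank_self, Module.finrank_fin_fun] at hrk
    have hmono : Module.finrank (ZMod 2) C ≤ Module.finrank (ZMod 2) (LinearMap.ker sumL) :=
      Submodule.finrank_mono hCle
    rw [hrank] at hmono
    omega
  refine ⟨ha, ?_⟩
  -- columns
  set b : Module.Basis (Fin k) (ZMod 2) C := Module.finBasisOfFinrankEq (ZMod 2) C hrank with hb
  set colvec : Fin n → (Fin k → ZMod 2) := fun i j => ((b j : Fin n → ZMod 2) i) with hcolvec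
  set evalL : Fin n → (C →ₗ[ZMod 2] ZMod 2) :=
    fun i => (LinearMap.proj i).comp C.subtype with hevalL
  have hevalapp : ∀ (i : Fin n) (c : C), evalL i c = (c : Fin n → ZMod 2) i := fun i c => rfl
  have hkey : ∀ i i' : Fin n, colvec i = colvec i' → ∀ c ∈ C, c i = c i' := by
    intro i i' h c hc
    have heq : evalL i = evalL i' := by
      apply b.ext
      intro j
      have := congrFun h j
      simpa [hevalapp, hcolvec] using this
    have := congrArg (fun f : C →ₗ[ZMod 2] ZMod 2 => f ⟨c, hc⟩) heq
    simpa [hevalapp] using this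
  have hcolinj : Function.Injective colvec := by
    intro i i' h
    by_contra hne
    obtain ⟨c, hc, hcc⟩ := hdist i i' hne
    exact hcc (hkey i i' h c hc)
  have hcolnz : ∀ i, colvec i ≠ 0 := by
    intro i h
    obtain ⟨c, hc, hcc⟩ := hnz i
    apply hcc
    have heq : evalL i = 0 := by
      apply b.ext
      intro j
      have := congrFun h j
      simpa [hevalapp, hcolvec] using this
    have := congrArg (fun f : C →ₗ[ZMod 2] ZMod 2 => f ⟨c, hc⟩) heq
    simpa [hevalapp] using this
  have hcolsum : ∑ i, colvec i = 0 := by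
    funext j
    rw [Finset.sum_apply]
    have : ∑ i, colvec i j = ∑ i, (b j : Fin n → ZMod 2) i := rfl
    rw [this]
    exact hsumzero _ (b j).2
  set T : Finset (Fin k → ZMod 2) := univ.image colvec with hT
  have hTcard : T.card = n := by
    rw [hT, Finset.card_image_of_injective _ hcolinj, Finset.card_univ, Fintype.card_fin]
  have hTsum : ∑ x ∈ T, x = 0 := by
    rw [hT, Finset.sum_image (fun x _ y _ h => hcolinj h)]
    exact hcolsum
  set E : Finset (Fin k → ZMod 2) := univ.erase 0 with hE
  have hTE : T ⊆ E := by
    intro x hx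
    obtain ⟨i, _, rfl⟩ := Finset.mem_image.mp (hT ▸ hx)
    exact Finset.mem_erase.mpr ⟨hcolnz i, Finset.mem_univ _⟩
  have hEcard : E.card = 2 ^ k - 1 := by
    rw [hE, Finset.card_erase_of_mem (Finset.mem_univ _), Finset.card_univ]
    simp [Fintype.card_fun]
  have hble : n ≤ 2 ^ k - 1 := by
    rw [← hTcard, ← hEcard]
    exact Finset.card_le_card hTE
  refine ⟨hble, ?_, ?_⟩
  -- k ≥ 2
  all_goals {
    have hk2 : 2 ≤ k := by
      rcases Nat.lt_or_ge k 2 with h | h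
      · interval_cases k
        simp at hble
        omega
      · exact h
    have h4 : 4 ≤ 2 ^ k := by
      calc (4 : ℕ) = 2 ^ 2 := by norm_num
      _ ≤ 2 ^ k := Nat.pow_le_pow_right (by norm_num) hk2
    have hEsum : ∑ x ∈ E, x = 0 := by
      have h := sum_univ_zmod2_pi hk2
      have h2 : (0 : Fin k → ZMod 2) + ∑ x ∈ univ.erase (0 : Fin k → ZMod 2), x
          = ∑ x : Fin k → ZMod 2, x := by
        rw [← Finset.sum_insert (f := fun x => x) (Finset.notMem_erase _ _),
          Finset.insert_erase (Finset.mem_univ _)]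
      rw [zero_add] at h2
      rw [hE, h2, h]
    have hsd := Finset.sum_sdiff (f := fun x : Fin k → ZMod 2 => x) hTE
    rw [hTsum, add_zero, hEsum] at hsd
    intro hne
    first
    | -- n = 2^k - 3 : complement has two elements
      (have hc2 : (E \ T).card = 2 := by
        rw [Finset.card_sdiff_of_subset hTE, hEcard, hTcard, hne]; omega
       obtain ⟨v, w, hvw, hET⟩ := Finset.card_eq_two.mp hc2
       rw [hET, Finset.sum_pair hvw] at hsd
       apply hvw
       have := congrArg (· + w) hsd
       simpa [add_assoc, pi_add_self] using this)
    | -- n = 2^k - 2 : complement has one element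
      (have hc1 : (E \ T).card = 1 := by
        rw [Finset.card_sdiff_of_subset hTE, hEcard, hTcard, hne]; omega
       obtain ⟨v, hET⟩ := Finset.card_eq_one.mp hc1
       rw [hET, Finset.sum_singleton] at hsd
       have hvE : v ∈ E := by
         have : v ∈ E \ T := by rw [hET]; exact Finset.mem_singleton_self v
         exact (Finset.mem_sdiff.mp this).1
       exact (Finset.mem_erase.mp (hE ▸ hvE)).1 hsd)
  }

/-- A projective 2-divisible binary linear [n,k] code exists if and only if
k+1 ≤ n ≤ 2^k − 1 and n ∉ {2^k − 3, 2^k − 2}. -/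
theorem projective_two_divisible_iff {n k : ℕ} (hn : 0 < n) (hk : 0 < k) :
    (∃ C : Submodule (ZMod 2) (Fin n → ZMod 2),
        Module.finrank (ZMod 2) C = k ∧
        (∀ c ∈ C, Even (hammingNorm c)) ∧
        (∀ i : Fin n, ∃ c ∈ C, c i ≠ 0) ∧
        (∀ i j : Fin n, i ≠ j → ∃ c ∈ C, c i ≠ c j)) ↔
      (k + 1 ≤ n ∧ n ≤ 2 ^ k - 1 ∧ n ≠ 2 ^ k - 3 ∧ n ≠ 2 ^ k - 2) := by
  constructor
  · rintro ⟨C, hrank, heven, hnz, hdist⟩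
    exact forward_dir hn hk C hrank heven hnz hdist
  · rintro ⟨h1, h2, h3, h4⟩
    have hk2 : 2 ≤ k := by
      rcases Nat.lt_or_ge k 2 with h | h
      · interval_cases k
        simp at h2
        omega
      · exact h
    obtain ⟨S, hc, h0, hs, hsp⟩ := exists_good_set hk2 h1 h2 h3 h4
    exact construct_code S hc h0 hs hsp
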